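/- For every integer n ≥ 1, the learning-rate weights satisfy 1/√n ≤ Σ_{i=1}^n α_n^i/√i ≤ 2/√n. -/

import Mathlib

open scoped BigOperators

noncomputable section

/-- The per-step learning rate `α_t = (H+1)/(H+t)`. -/
def alphaT (H t : ℕ) : ℝ := (H + 1) / (H + t)

/-- The aggregated learning-rate weights `α_n^i`:
`α_0^0 = 1`, `α_n^0 = 0` for `n ≥ 1`, and `α_n^i = α_i ∏_{j=i+1}^n (1 - α_j)` for `1 ≤ i ≤ n`. -/
def alphaW (H n i : ℕ) : ℝ :=
  if i = 0 then (if n = 0 then 1 else 0)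
  else alphaT H i * ∏ j ∈ Finset.Icc (i + 1) n, (1 - alphaT H j)

lemma alphaT_pos (H t : ℕ) (ht : 1 ≤ t) : 0 < alphaT H t := by
  have h1 : (0:ℝ) < t := by exact_mod_cast ht
  unfold alphaT
  apply div_pos <;> positivity

lemma alphaT_le_one (H t : ℕ) (ht : 1 ≤ t) : alphaT H t ≤ 1 := by
  have h1 : (1:ℝ) ≤ t := by exact_mod_cast ht
  unfold alphaT
  rw [div_le_one (by positivity)]
  linarith

lemma alphaW_nonneg (H n i : ℕ) (hi : 1 ≤ i) : 0 ≤ alphaW H n i := by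
  unfold alphaW
  rw [if_neg (by omega)]
  refine mul_nonneg (alphaT_pos H i hi).le (Finset.prod_nonneg fun j hj => ?_)
  rw [Finset.mem_Icc] at hj
  linarith [alphaT_le_one H j (by omega)]

lemma alphaW_self (H n : ℕ) (hn : 1 ≤ n) : alphaW H n n = alphaT H n := by
  unfold alphaW
  rw [if_neg (by omega), Finset.Icc_eq_empty (by omega), Finset.prod_empty, mul_one]

lemma alphaW_succ (H n i : ℕ) (hi : 1 ≤ i) (hin : i ≤ n) :
    alphaW H (n+1) i = (1 - alphaT H (n+1)) * alphaW H n i := by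
  unfold alphaW
  rw [if_neg (by omega), if_neg (by omega),
    Finset.prod_Icc_succ_top (by omega : i + 1 ≤ n + 1)]
  ring

lemma sum_alphaW (H n : ℕ) (hn : 1 ≤ n) : ∑ i ∈ Finset.Icc 1 n, alphaW H n i = 1 := by
  induction n, hn using Nat.le_induction with
  | base =>
      rw [Finset.Icc_self, Finset.sum_singleton, alphaW_self H 1 le_rfl]
      unfold alphaT
      push_cast
      rw [div_self (by positivity)]
  | succ n hn ih =>
      have hrw : ∑ i ∈ Finset.Icc 1 n, alphaW H (n+1) i
          = (1 - alphaT H (n+1)) * ∑ i ∈ Finset.Icc 1 n, alphaW H n i := by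
        rw [Finset.mul_sum]
        refine Finset.sum_congr rfl fun i hi => ?_
        rw [Finset.mem_Icc] at hi
        exact alphaW_succ H n i hi.1 hi.2
      rw [Finset.sum_Icc_succ_top (by omega : 1 ≤ n + 1), alphaW_self H (n+1) (by omega),
        hrw, ih]
      ring

lemma step_ineq (h s t : ℝ) (hh : 0 ≤ h) (hs : 0 < s) (ht : 0 < t)
    (hsq : t^2 = s^2 + 1) :
    (h+1)/(h+(s^2+1)) / t + (1 - (h+1)/(h+(s^2+1))) * (2/s) ≤ 2/t := by
  have hD : 0 < h + (s^2+1) := by positivity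
  have hst : 2*s*t ≤ s^2 + t^2 := by nlinarith [sq_nonneg (s - t)]
  have h1 : 1 - (h+1)/(h+(s^2+1)) = s^2/(h+(s^2+1)) := by
    field_simp
    ring
  have e1 : (h+1)/(h+(s^2+1))/t + s^2/(h+(s^2+1))*(2/s)
      = ((h+1)*s + 2*s^2*t)/((h+(s^2+1))*s*t) := by
    field_simp
  rw [h1, e1, div_le_div_iff₀ (by positivity) ht]
  nlinarith [mul_pos hs ht, mul_nonneg hh (mul_pos hs ht).le,
    mul_le_mul_of_nonneg_right hst (mul_pos hs ht).le]

/-- For every `n ≥ 1`, `1/√n ≤ ∑_{i=1}^n α_n^i/√i ≤ 2/√n`. -/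
theorem alphaW_div_sqrt_sum_bounds (H : ℕ) (hH : 1 ≤ H) (n : ℕ) (hn : 1 ≤ n) :
    1 / Real.sqrt n ≤ ∑ i ∈ Finset.Icc 1 n, alphaW H n i / Real.sqrt i ∧
    ∑ i ∈ Finset.Icc 1 n, alphaW H n i / Real.sqrt i ≤ 2 / Real.sqrt n := by
  constructor
  · -- lower bound
    have hns : (0:ℝ) < Real.sqrt n := Real.sqrt_pos.mpr (by exact_mod_cast hn)
    calc 1 / Real.sqrt n = ∑ i ∈ Finset.Icc 1 n, alphaW H n i / Real.sqrt n := by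
            rw [← Finset.sum_div, sum_alphaW H n hn]
      _ ≤ ∑ i ∈ Finset.Icc 1 n, alphaW H n i / Real.sqrt i := by
            refine Finset.sum_le_sum fun i hi => ?_
            rw [Finset.mem_Icc] at hi
            have his : (0:ℝ) < Real.sqrt i := Real.sqrt_pos.mpr (by exact_mod_cast hi.1)
            exact div_le_div_of_nonneg_left (alphaW_nonneg H n i hi.1) his
              (Real.sqrt_le_sqrt (by exact_mod_cast hi.2))
  · -- upper bound
    induction n, hn using Nat.le_induction with
    | base =>
        rw [Finset.Icc_self, Finset.sum_singleton, alphaW_self H 1 le_rfl]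
        unfold alphaT
        push_cast
        rw [Real.sqrt_one, div_one, div_self (by positivity : ((H:ℝ)+1) ≠ 0)]
        norm_num
    | succ n hn ih =>
        have hns : (0:ℝ) < Real.sqrt n := Real.sqrt_pos.mpr (by exact_mod_cast hn)
        have hns1 : (0:ℝ) < Real.sqrt (n+1) := Real.sqrt_pos.mpr (by positivity)
        have hrw : ∑ i ∈ Finset.Icc 1 n, alphaW H (n+1) i / Real.sqrt i
            = (1 - alphaT H (n+1)) * ∑ i ∈ Finset.Icc 1 n, alphaW H n i / Real.sqrt i := by
          rw [Finset.mul_sum]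
          refine Finset.sum_congr rfl fun i hi => ?_
          rw [Finset.mem_Icc] at hi
          rw [alphaW_succ H n i hi.1 hi.2, mul_div_assoc]
        rw [Finset.sum_Icc_succ_top (by omega : 1 ≤ n + 1), alphaW_self H (n+1) (by omega), hrw]
        have h1a : 0 ≤ 1 - alphaT H (n+1) := by
          linarith [alphaT_le_one H (n+1) (by omega)]
        have key : (1 - alphaT H (n+1)) * (∑ i ∈ Finset.Icc 1 n, alphaW H n i / Real.sqrt i)
            + alphaT H (n+1) / Real.sqrt (n+1) ≤ 2 / Real.sqrt (n+1) := by
          have h2 : (1 - alphaT H (n+1)) * (∑ i ∈ Finset.Icc 1 n, alphaW H n i / Real.sqrt i)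
              ≤ (1 - alphaT H (n+1)) * (2 / Real.sqrt n) :=
            mul_le_mul_of_nonneg_left ih h1a
          have h3 : alphaT H (n+1) / Real.sqrt (n+1)
              + (1 - alphaT H (n+1)) * (2 / Real.sqrt n) ≤ 2 / Real.sqrt (n+1) := by
            have hsq : (Real.sqrt (n+1))^2 = (Real.sqrt n)^2 + 1 := by
              rw [Real.sq_sqrt (by positivity : (0:ℝ) ≤ (n:ℝ)+1),
                Real.sq_sqrt (by positivity : (0:ℝ) ≤ (n:ℝ))]
            have hh : (0:ℝ) ≤ H := by positivity
            have := step_ineq (H:ℝ) (Real.sqrt n) (Real.sqrt (n+1)) hh hns hns1 hsq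
            have ha : alphaT H (n+1) = ((H:ℝ)+1)/((H:ℝ)+((Real.sqrt n)^2+1)) := by
              unfold alphaT
              rw [Real.sq_sqrt (by positivity : (0:ℝ) ≤ (n:ℝ))]
              push_cast
              ring_nf
            rw [ha]
            convert this using 3
          linarith
        push_cast
        linarith [key]
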